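/- Let K be a field and f ∈ K[X] monic irreducible of degree d ≥ 3. Define g(X) = X^d·f(1/X) (the reciprocal polynomial) and h(X) = (1 − g(X))/X. Then h is a polynomial in K[X] and g(X) divides f(h(X)) in K[X]. -/
import Mathlib

open Polynomial

theorem stmt5 (K : Type*) [Field K] (f : Polynomial K) (d : ℕ)
    (hf : Irreducible f) (hmonic : f.Monic) (hd : f.natDegree = d) (hd3 : 3 ≤ d)
    (g : Polynomial K) (hg : g = f.reverse) :
    ∃ h : Polynomial K, Polynomial.X * h = 1 - g ∧ g ∣ f.comp h := by
  obtain ⟨h, hh⟩ : (X : Polynomial K) ∣ (1 - g) := by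
    rw [Polynomial.X_dvd_iff]
    simp [hg, Polynomial.coeff_zero_reverse, hmonic.leadingCoeff]
  refine ⟨h, hh.symm, ?_⟩
  set I := Ideal.span ({g} : Set (Polynomial K))
  set φ : Polynomial K →+* (Polynomial K ⧸ I) := Ideal.Quotient.mk I
  have key : ∀ p : Polynomial K, φ p = eval₂ (φ.comp C) (φ X) p := by
    intro p
    conv_lhs => rw [← Polynomial.eval₂_C_X (p := p)]
    exact Polynomial.hom_eval₂ _ _ _ _
  have hg0 : φ g = 0 := Ideal.Quotient.eq_zero_iff_mem.mpr (Ideal.subset_span rfl)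
  have hmul : φ h * φ X = 1 := by
    rw [mul_comm, ← map_mul, hh.symm, map_sub, map_one, hg0, sub_zero]
  have : Invertible (φ h) := ⟨φ X, by rw [mul_comm] at hmul; exact hmul, hmul⟩
  rw [← Ideal.Quotient.eq_zero_iff_dvd]
  have hφX : ⅟ (φ h) = φ X := invOf_eq_right_inv hmul
  have hrev : eval₂ (φ.comp C) (⅟ (φ h)) f.reverse = 0 := by
    rw [hφX, ← key, ← hg, hg0]
  have := (Polynomial.eval₂_reverse_eq_zero_iff (φ.comp C) (φ h) f).mp hrev
  rw [key, Polynomial.eval₂_comp, ← key, this]
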